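/- For any sequence (t'_j) of positive reals satisfying t'_{p+j} ≤ ((p+j)/j)·t'_j for all positive integers p, j, the products T'_p = ∏_{j=1}^p t'_j satisfy T'_{p+q} ≤ (p+q)!/(p!·q!) · T'_p · T'_q ≤ 2^{p+q} · T'_p · T'_q for all positive integers p, q. -/

import Mathlib

lemma fact_prod_aux (p : ℕ) : ∀ q : ℕ,
    p.factorial * ∏ j ∈ Finset.Icc 1 q, (p + j) = (p + q).factorial := by
  intro q
  induction q with
  | zero => simp
  | succ q ih =>
    rw [Finset.prod_Icc_succ_top (Nat.le_add_left 1 q), ← mul_assoc, ih,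
      ← Nat.add_assoc, Nat.factorial_succ, Nat.mul_comm]

lemma choose_le_two_pow' (n k : ℕ) (hk : k ≤ n) : n.choose k ≤ 2 ^ n := by
  rw [← Nat.sum_range_choose n]
  exact Finset.single_le_sum (fun i _ => Nat.zero_le _)
    (Finset.mem_range.mpr (Nat.lt_succ_of_le hk))

/-- If a positive sequence `(t'_j)` satisfies `t'_{p+j} ≤ ((p+j)/j)·t'_j` for all
`p, j ≥ 1`, then its partial products `T'_p = ∏_{j=1}^p t'_j` satisfy
`T'_{p+q} ≤ (p+q)!/(p!·q!) · T'_p · T'_q ≤ 2^{p+q} · T'_p · T'_q`. -/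
theorem prod_le_binom_mul_prod
    (t' : ℕ → ℝ) (hpos : ∀ j, 0 < t' j)
    (h : ∀ p j : ℕ, 0 < p → 0 < j → t' (p + j) ≤ ((p + j : ℝ) / (j : ℝ)) * t' j) :
    ∀ p q : ℕ, 0 < p → 0 < q →
      (∏ j ∈ Finset.Icc 1 (p + q), t' j) ≤
          ((p + q).factorial : ℝ) / ((p.factorial : ℝ) * (q.factorial : ℝ)) *
            (∏ j ∈ Finset.Icc 1 p, t' j) * (∏ j ∈ Finset.Icc 1 q, t' j) ∧
        ((p + q).factorial : ℝ) / ((p.factorial : ℝ) * (q.factorial : ℝ)) *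
            (∏ j ∈ Finset.Icc 1 p, t' j) * (∏ j ∈ Finset.Icc 1 q, t' j) ≤
          2 ^ (p + q) * (∏ j ∈ Finset.Icc 1 p, t' j) * (∏ j ∈ Finset.Icc 1 q, t' j) := by
  intro p q hp hq
  have hTp : 0 < ∏ j ∈ Finset.Icc 1 p, t' j := Finset.prod_pos fun j _ => hpos j
  have hTq : 0 < ∏ j ∈ Finset.Icc 1 q, t' j := Finset.prod_pos fun j _ => hpos j
  have hbin : ((p + q).factorial : ℝ) / ((p.factorial : ℝ) * (q.factorial : ℝ))
      = ((p + q).choose p : ℝ) := by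
    have := Nat.add_choose_mul_factorial_mul_factorial p q
    field_simp
    push_cast [← this]
    rw [Nat.choose_symm_add]
    ring
  have hIoc : ∀ n : ℕ, Finset.Icc 1 n = Finset.Ioc 0 n := fun n => rfl
  constructor
  · -- split the product
    have hsplit : (∏ j ∈ Finset.Icc 1 (p + q), t' j)
        = (∏ j ∈ Finset.Icc 1 p, t' j) * ∏ j ∈ Finset.Icc 1 q, t' (p + j) := by
      rw [hIoc (p + q), hIoc p, hIoc q,
        ← Finset.prod_Ioc_consecutive (fun j => t' j) (Nat.zero_le p)
          (Nat.le_add_right p q)]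
      congr 1
      rw [show Finset.Ioc p (p + q) = (Finset.Ioc 0 q).map
          (addLeftEmbedding p) by simp [Finset.map_add_left_Ioc], Finset.prod_map]
      rfl
    -- the key bound
    have hj : ∀ j ∈ Finset.Icc 1 q, t' (p + j) ≤ ((p + j : ℝ) / (j : ℝ)) * t' j := by
      intro j hj
      exact h p j hp (by exact (Finset.mem_Icc.mp hj).1)
    have hprodnat : ((∏ j ∈ Finset.Icc 1 q, (p + j) : ℕ) : ℝ)
        = ∏ j ∈ Finset.Icc 1 q, ((p : ℝ) + (j : ℝ)) := by push_cast; rfl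
    have hfac : (∏ j ∈ Finset.Icc 1 q, ((j : ℕ) : ℝ)) = (q.factorial : ℝ) := by
      rw [← Nat.cast_prod]
      congr 1
      rw [← Finset.Ico_add_one_right_eq_Icc]
      exact Finset.prod_Ico_id_eq_factorial q
    have hratio : (∏ j ∈ Finset.Icc 1 q, ((p + j : ℝ) / (j : ℝ)))
        = ((p + q).factorial : ℝ) / ((p.factorial : ℝ) * (q.factorial : ℝ)) := by
      rw [Finset.prod_div_distrib, ← hprodnat, hfac]
      have := fact_prod_aux p q
      have hpf : (0 : ℝ) < p.factorial := by exact_mod_cast p.factorial_pos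
      have hqf : (0 : ℝ) < q.factorial := by exact_mod_cast q.factorial_pos
      rw [div_eq_div_iff hqf.ne' (by positivity)]
      push_cast [← this]
      ring
    calc (∏ j ∈ Finset.Icc 1 (p + q), t' j)
        = (∏ j ∈ Finset.Icc 1 p, t' j) * ∏ j ∈ Finset.Icc 1 q, t' (p + j) := hsplit
      _ ≤ (∏ j ∈ Finset.Icc 1 p, t' j) *
            ∏ j ∈ Finset.Icc 1 q, ((p + j : ℝ) / (j : ℝ)) * t' j := by
          gcongr with j hjm
          · exact fun j _ => (hpos _).le
          · exact hj j hjm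
      _ = ((p + q).factorial : ℝ) / ((p.factorial : ℝ) * (q.factorial : ℝ)) *
            (∏ j ∈ Finset.Icc 1 p, t' j) * (∏ j ∈ Finset.Icc 1 q, t' j) := by
          rw [Finset.prod_mul_distrib, hratio]; ring
  · rw [hbin]
    have h2 : ((p + q).choose p : ℝ) ≤ 2 ^ (p + q) := by
      exact_mod_cast choose_le_two_pow' (p + q) p (Nat.le_add_right p q)
    have := mul_pos hTp hTq
    calc ((p + q).choose p : ℝ) * (∏ j ∈ Finset.Icc 1 p, t' j) *
          (∏ j ∈ Finset.Icc 1 q, t' j)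
        ≤ 2 ^ (p + q) * (∏ j ∈ Finset.Icc 1 p, t' j) *
          (∏ j ∈ Finset.Icc 1 q, t' j) := by
          rw [mul_assoc, mul_assoc]
          exact mul_le_mul_of_nonneg_right h2 this.le
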